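/- Let a, b, c be nonzero integers. There exists a 6-coloring χ of the 2-element subsets of ℤ such that for every triple of pairwise distinct integers x, y, z with a·x + b·y + c·z = 0, the three pairs {x,y}, {x,z}, {y,z} do not all receive the same color under χ. -/

import Mathlib

set_option maxHeartbeats 1000000

open Classical

noncomputable section

namespace NoMonoAux

/-! ### Arithmetic helper lemmas -/

lemma helperBox (p q S : ℤ) (hp : |p| ≤ S) (hq : |q| ≤ S) : |p + q| + |p - q| ≤ 2 * S := by
  obtain ⟨hp1, hp2⟩ := abs_le.mp hp
  obtain ⟨hq1, hq2⟩ := abs_le.mp hq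
  rcases abs_cases (p + q) with ⟨h1, _⟩ | ⟨h1, _⟩ <;>
    rcases abs_cases (p - q) with ⟨h2, _⟩ | ⟨h2, _⟩ <;> linarith

lemma helperMax (P Q M : ℤ) (h1 : |P + Q| ≤ M) (h2 : |P - Q| ≤ M) : |P| + |Q| ≤ M := by
  obtain ⟨ha1, ha2⟩ := abs_le.mp h1
  obtain ⟨hb1, hb2⟩ := abs_le.mp h2
  rcases abs_cases P with ⟨h3, _⟩ | ⟨h3, _⟩ <;>
    rcases abs_cases Q with ⟨h4, _⟩ | ⟨h4, _⟩ <;> linarith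

lemma finalContr {a b c s d m : ℤ} (ha : 0 < a) (hb : 0 < b) (hc : c < 0)
    (hs0 : 0 ≤ s) (hd1 : 1 ≤ d) (hm : 0 ≤ m)
    (I : (a + b - c) * s + m * d ≤ (-c) * (2 * s - d))
    (II : (b - a - c) * s + (a - c) * d ≤ b * (2 * s - d)) : False := by
  have hcd : c * d ≤ -1 := by nlinarith
  have hmd : (0:ℤ) ≤ m * d := mul_nonneg hm (by linarith)
  have hI' : (a + b + c) * s ≤ -1 := by nlinarith [I, hcd, hmd]
  have hs1 : 1 ≤ s := by
    rcases lt_or_ge s 1 with h | h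
    · exfalso; have hs : s = 0 := by omega
      rw [hs, mul_zero] at hI'; omega
    · exact h
  have hT : a + b + c ≤ -1 := by
    by_contra h
    have h0 : (0:ℤ) ≤ a + b + c := by omega
    have : (0:ℤ) ≤ (a + b + c) * s := mul_nonneg h0 hs0
    omega
  have p1 : (0:ℤ) < (-(a + b + c)) * s := mul_pos (by omega) (by omega)
  have p2 : (0:ℤ) < (a + b - c) * d := mul_pos (by linarith) (by omega)
  nlinarith [II, p1, p2]

/-- The core contradiction: if `a,b > 0 > c` and the four candidates attached to the
slots with denominators `c` and `b` all lie in the sum-box of the pair `{u,v}`,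
we get a contradiction. -/
lemma core {a b c u v w1 w2 w3 w4 : ℤ} (ha : 0 < a) (hb : 0 < b) (hc : c < 0)
    (huv : u ≠ v)
    (h1 : c * w1 = -(a * u + b * v)) (h2 : c * w2 = -(a * v + b * u))
    (h3 : b * w3 = -(a * u + c * v)) (h4 : b * w4 = -(c * u + a * v))
    (b1 : |u + w1| ≤ |u + v|) (b1' : |v + w1| ≤ |u + v|)
    (b2 : |u + w2| ≤ |u + v|) (b2' : |v + w2| ≤ |u + v|)
    (b3 : |u + w3| ≤ |u + v|) (b3' : |v + w3| ≤ |u + v|)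
    (b4 : |u + w4| ≤ |u + v|) (b4' : |v + w4| ≤ |u + v|) : False := by
  set s : ℤ := |u + v| with hs_def
  set d : ℤ := |u - v| with hd_def
  have hs0 : 0 ≤ s := abs_nonneg _
  have hd1 : 1 ≤ d := by
    have : u - v ≠ 0 := sub_ne_zero.mpr huv
    have := abs_pos.mpr this
    omega
  have box : ∀ w : ℤ, |u + w| ≤ s → |v + w| ≤ s → |2 * w + (u + v)| ≤ 2 * s - d := by
    intro w hp hq
    have h := helperBox (u + w) (v + w) s hp hq
    have e1 : (u + w) + (v + w) = 2 * w + (u + v) := by ring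
    have e2 : (u + w) - (v + w) = u - v := by ring
    rw [e1, e2] at h
    omega
  have B1 := box w1 b1 b1'
  have B2 := box w2 b2 b2'
  have B3 := box w3 b3 b3'
  have B4 := box w4 b4 b4'
  have X1 : c * (2 * w1 + (u + v)) = -((a + b - c) * (u + v) + (a - b) * (u - v)) := by
    linear_combination 2 * h1
  have X2 : c * (2 * w2 + (u + v)) = -((a + b - c) * (u + v) - (a - b) * (u - v)) := by
    linear_combination 2 * h2
  have X3 : b * (2 * w3 + (u + v)) = -((a + c - b) * (u + v) + (a - c) * (u - v)) := by
    linear_combination 2 * h3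
  have X4 : b * (2 * w4 + (u + v)) = -((a + c - b) * (u + v) - (a - c) * (u - v)) := by
    linear_combination 2 * h4
  have habs_c : |c| = -c := abs_of_neg hc
  have habs_b : |b| = b := abs_of_pos hb
  have hM : (0:ℤ) ≤ 2 * s - d := le_trans (abs_nonneg _) B1
  -- bound for slot with denominator c
  have bound1 : |(a + b - c) * (u + v) + (a - b) * (u - v)| ≤ (-c) * (2 * s - d) := by
    have : |c * (2 * w1 + (u + v))| ≤ (-c) * (2 * s - d) := by
      rw [abs_mul, habs_c]
      exact mul_le_mul_of_nonneg_left B1 (by linarith)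
    rw [X1, abs_neg] at this
    exact this
  have bound2 : |(a + b - c) * (u + v) - (a - b) * (u - v)| ≤ (-c) * (2 * s - d) := by
    have : |c * (2 * w2 + (u + v))| ≤ (-c) * (2 * s - d) := by
      rw [abs_mul, habs_c]
      exact mul_le_mul_of_nonneg_left B2 (by linarith)
    rw [X2, abs_neg] at this
    exact this
  have bound3 : |(a + c - b) * (u + v) + (a - c) * (u - v)| ≤ b * (2 * s - d) := by
    have : |b * (2 * w3 + (u + v))| ≤ b * (2 * s - d) := by
      rw [abs_mul, habs_b]
      exact mul_le_mul_of_nonneg_left B3 (by linarith)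
    rw [X3, abs_neg] at this
    exact this
  have bound4 : |(a + c - b) * (u + v) - (a - c) * (u - v)| ≤ b * (2 * s - d) := by
    have : |b * (2 * w4 + (u + v))| ≤ b * (2 * s - d) := by
      rw [abs_mul, habs_b]
      exact mul_le_mul_of_nonneg_left B4 (by linarith)
    rw [X4, abs_neg] at this
    exact this
  have I0 : |(a + b - c) * (u + v)| + |(a - b) * (u - v)| ≤ (-c) * (2 * s - d) :=
    helperMax _ _ _ bound1 bound2
  have II0 : |(a + c - b) * (u + v)| + |(a - c) * (u - v)| ≤ b * (2 * s - d) :=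
    helperMax _ _ _ bound3 bound4
  have hA : |(a + b - c) * (u + v)| = (a + b - c) * s := by
    rw [abs_mul, abs_of_pos (by linarith : (0:ℤ) < a + b - c)]
  have hQ : |(a - b) * (u - v)| = |a - b| * d := by rw [abs_mul]
  have hAC : |(a - c) * (u - v)| = (a - c) * d := by
    rw [abs_mul, abs_of_pos (by linarith : (0:ℤ) < a - c)]
  have hB : (b - a - c) * s ≤ |(a + c - b) * (u + v)| := by
    rw [abs_mul]
    have h1 : (b - a - c) ≤ |a + c - b| := by
      have := neg_le_abs (a + c - b); linarith
    exact mul_le_mul_of_nonneg_right h1 hs0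
  have I : (a + b - c) * s + |a - b| * d ≤ (-c) * (2 * s - d) := by
    rw [hA, hQ] at I0; exact I0
  have II : (b - a - c) * s + (a - c) * d ≤ b * (2 * s - d) := by
    have := II0
    rw [hAC] at this
    linarith [hB]
  exact finalContr ha hb hc hs0 hd1 (abs_nonneg _) I II


/-! ### The key and its well-founded order -/

def pkey (e : Sym2 ℤ) : ℕ × ℕ :=
  Sym2.lift ⟨fun u v => ((u + v).natAbs, Nat.pair (u - v).natAbs (if 0 ≤ u + v then 0 else 1)),
    by
      intro u v
      have h1 : u + v = v + u := by ring
      have h2 : (u - v).natAbs = (v - u).natAbs := by omega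
      simp [h1, h2]⟩ e

@[simp] lemma pkey_mk (u v : ℤ) :
    pkey s(u, v) = ((u + v).natAbs, Nat.pair (u - v).natAbs (if 0 ≤ u + v then 0 else 1)) := by
  simp [pkey]

def klt (e f : Sym2 ℤ) : Prop := Prod.Lex (· < ·) (· < ·) (pkey e) (pkey f)

lemma klt_wf : WellFounded klt :=
  InvImage.wf pkey (WellFounded.prod_lex (Nat.lt_wfRel.wf) (Nat.lt_wfRel.wf))

lemma klt_of_keys {e f : Sym2 ℤ}
    (h : (pkey e).1 < (pkey f).1 ∨ ((pkey e).1 = (pkey f).1 ∧ (pkey e).2 < (pkey f).2)) :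
    klt e f := by
  unfold klt
  rcases h with h | ⟨h1, h2⟩
  · exact (Prod.lex_def).mpr (Or.inl h)
  · exact (Prod.lex_def).mpr (Or.inr ⟨h1, h2⟩)

lemma keys_of_klt {e f : Sym2 ℤ} (h : klt e f) :
    (pkey e).1 < (pkey f).1 ∨ ((pkey e).1 = (pkey f).1 ∧ (pkey e).2 < (pkey f).2) := by
  unfold klt at h
  exact (Prod.lex_def).mp h

lemma klt_fst_le {e f : Sym2 ℤ} (h : klt e f) : (pkey e).1 ≤ (pkey f).1 := by
  rcases keys_of_klt h with h | ⟨h1, _⟩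
  · omega
  · omega

lemma klt_trans {e f g : Sym2 ℤ} (h1 : klt e f) (h2 : klt f g) : klt e g := by
  have a1 := keys_of_klt h1
  have a2 := keys_of_klt h2
  apply klt_of_keys
  omega

lemma pkey_inj {e f : Sym2 ℤ} (h : pkey e = pkey f) : e = f := by
  induction e using Sym2.ind with
  | _ u v =>
  induction f using Sym2.ind with
  | _ p q =>
  simp only [pkey_mk, Prod.mk.injEq] at h
  obtain ⟨h1, h2⟩ := h
  rw [Nat.pair_eq_pair] at h2
  obtain ⟨h2, h3⟩ := h2
  have hsum : u + v = p + q := by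
    by_cases hu : 0 ≤ u + v <;> by_cases hp : 0 ≤ p + q <;> simp [hu, hp] at h3 ⊢ <;> omega
  have : (u = p ∧ v = q) ∨ (u = q ∧ v = p) := by omega
  rcases this with ⟨rfl, rfl⟩ | ⟨rfl, rfl⟩
  · rfl
  · exact Sym2.eq_swap

lemma klt_total (e f : Sym2 ℤ) : klt e f ∨ e = f ∨ klt f e := by
  rcases Nat.lt_trichotomy (pkey e).1 (pkey f).1 with h | h | h
  · exact Or.inl (klt_of_keys (Or.inl h))
  · rcases Nat.lt_trichotomy (pkey e).2 (pkey f).2 with h2 | h2 | h2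
    · exact Or.inl (klt_of_keys (Or.inr ⟨h, h2⟩))
    · refine Or.inr (Or.inl (pkey_inj ?_))
      exact Prod.ext h h2
    · exact Or.inr (Or.inr (klt_of_keys (Or.inr ⟨h.symm, h2⟩)))
  · exact Or.inr (Or.inr (klt_of_keys (Or.inl h)))

lemma abs_le_of_klt {u w p q : ℤ} (h : klt s(u, w) s(p, q)) : |u + w| ≤ |p + q| := by
  have := klt_fst_le h
  simp only [pkey_mk] at this
  rw [Int.abs_eq_natAbs, Int.abs_eq_natAbs]
  exact_mod_cast this


/-! ### The greedy construction  -/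

def wcand (α β γ u v : ℤ) : ℤ := (-(α * u + β * v)) / γ

def slotGuard (α β γ u v : ℤ) (e : Sym2 ℤ) : Prop :=
  γ * wcand α β γ u v = -(α * u + β * v) ∧ wcand α β γ u v ≠ u ∧ wcand α β γ u v ≠ v ∧
    klt s(u, wcand α β γ u v) e ∧ klt s(v, wcand α β γ u v) e

def slotF (α β γ u v : ℤ) (e : Sym2 ℤ) (g : Sym2 ℤ → Fin 6) : Finset (Fin 6) :=
  if slotGuard α β γ u v e then {g s(u, wcand α β γ u v)} else ∅

def Forb (a b c u v : ℤ) (e : Sym2 ℤ) (g : Sym2 ℤ → Fin 6) : Finset (Fin 6) :=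
  slotF a b c u v e g ∪ slotF b a c u v e g ∪ slotF a c b u v e g ∪ slotF c a b u v e g ∪
    slotF b c a u v e g ∪ slotF c b a u v e g

def pickF (a b c : ℤ) (e : Sym2 ℤ) (g : Sym2 ℤ → Fin 6) : Fin 6 :=
  if h : (Finset.univ \ Forb a b c e.out.1 e.out.2 e g).Nonempty then
    (Finset.univ \ Forb a b c e.out.1 e.out.2 e g).min' h
  else 0

def chi (a b c : ℤ) : Sym2 ℤ → Fin 6 :=
  klt_wf.fix fun e rec =>
    pickF a b c e fun f => if h : klt f e then rec f h else 0

lemma chi_eq (a b c : ℤ) (e : Sym2 ℤ) :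
    chi a b c e = pickF a b c e fun f => if _ : klt f e then chi a b c f else 0 := by
  rw [chi, WellFounded.fix_eq]

lemma wcand_eq {α β γ u v w : ℤ} (hγ : γ ≠ 0) (h : γ * w = -(α * u + β * v)) :
    wcand α β γ u v = w := by
  rw [wcand, ← h, Int.mul_ediv_cancel_left _ hγ]

lemma slotF_card_le (α β γ u v : ℤ) (e : Sym2 ℤ) (g : Sym2 ℤ → Fin 6) :
    (slotF α β γ u v e g).card ≤ 1 := by
  rw [slotF]
  split <;> simp

lemma slotF_card_eq_zero {α β γ u v : ℤ} {e : Sym2 ℤ} (h : ¬ slotGuard α β γ u v e)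
    (g : Sym2 ℤ → Fin 6) : (slotF α β γ u v e g).card = 0 := by
  rw [slotF, if_neg h]; rfl

lemma mem_slotF {α β γ u v : ℤ} {e : Sym2 ℤ} (h : slotGuard α β γ u v e)
    (g : Sym2 ℤ → Fin 6) : g s(u, wcand α β γ u v) ∈ slotF α β γ u v e g := by
  rw [slotF, if_pos h]; exact Finset.mem_singleton_self _


/-! ### Cardinality bound and the punch lemma -/

lemma union_card_aux {s1 s2 : Finset (Fin 6)} {n m : ℕ} (h1 : s1.card ≤ n) (h2 : s2.card ≤ m) :
    (s1 ∪ s2).card ≤ n + m :=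
  le_trans (Finset.card_union_le _ _) (add_le_add h1 h2)

lemma Forb_card_le {a b c u v : ℤ} (ha : 0 < a) (hb : 0 < b) (hc : c < 0) (huv : u ≠ v)
    (e : Sym2 ℤ) (he : e = s(u, v)) (g : Sym2 ℤ → Fin 6) :
    (Forb a b c u v e g).card ≤ 5 := by
  have hnotall : ¬ (slotGuard a b c u v e ∧ slotGuard b a c u v e ∧
      slotGuard a c b u v e ∧ slotGuard c a b u v e) := by
    rintro ⟨⟨e1, -, -, k1, k1'⟩, ⟨e2, -, -, k2, k2'⟩, ⟨e3, -, -, k3, k3'⟩, ⟨e4, -, -, k4, k4'⟩⟩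
    subst he
    refine core ha hb hc huv e1 (by linarith [e2]) e3 e4
      (abs_le_of_klt k1) (abs_le_of_klt k1')
      (abs_le_of_klt k2) (abs_le_of_klt k2')
      (abs_le_of_klt k3) (abs_le_of_klt k3')
      (abs_le_of_klt k4) (abs_le_of_klt k4')
  have hc1 := slotF_card_le a b c u v e g
  have hc2 := slotF_card_le b a c u v e g
  have hc3 := slotF_card_le a c b u v e g
  have hc4 := slotF_card_le c a b u v e g
  have hc5 := slotF_card_le b c a u v e g
  have hc6 := slotF_card_le c b a u v e g
  by_cases g1 : slotGuard a b c u v e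
  · by_cases g2 : slotGuard b a c u v e
    · by_cases g3 : slotGuard a c b u v e
      · have g4 : ¬ slotGuard c a b u v e := fun g4 => hnotall ⟨g1, g2, g3, g4⟩
        have h0 := slotF_card_eq_zero g4 g
        exact union_card_aux (union_card_aux (union_card_aux (union_card_aux
          (union_card_aux hc1 hc2) hc3) (le_of_eq h0)) hc5) hc6
      · have h0 := slotF_card_eq_zero g3 g
        exact union_card_aux (union_card_aux (union_card_aux (union_card_aux
          (union_card_aux hc1 hc2) (le_of_eq h0)) hc4) hc5) hc6
    · have h0 := slotF_card_eq_zero g2 g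
      exact union_card_aux (union_card_aux (union_card_aux (union_card_aux
        (union_card_aux hc1 (le_of_eq h0)) hc3) hc4) hc5) hc6
  · have h0 := slotF_card_eq_zero g1 g
    exact union_card_aux (union_card_aux (union_card_aux (union_card_aux
      (union_card_aux (le_of_eq h0) hc2) hc3) hc4) hc5) hc6

lemma mem_Forb1 {a b c u v : ℤ} {e : Sym2 ℤ} (h : slotGuard a b c u v e) (g : Sym2 ℤ → Fin 6) :
    g s(u, wcand a b c u v) ∈ Forb a b c u v e g :=
  Finset.mem_union_left _ (Finset.mem_union_left _ (Finset.mem_union_left _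
    (Finset.mem_union_left _ (Finset.mem_union_left _ (mem_slotF h g)))))

lemma mem_Forb2 {a b c u v : ℤ} {e : Sym2 ℤ} (h : slotGuard b a c u v e) (g : Sym2 ℤ → Fin 6) :
    g s(u, wcand b a c u v) ∈ Forb a b c u v e g :=
  Finset.mem_union_left _ (Finset.mem_union_left _ (Finset.mem_union_left _
    (Finset.mem_union_left _ (Finset.mem_union_right _ (mem_slotF h g)))))

lemma mem_Forb3 {a b c u v : ℤ} {e : Sym2 ℤ} (h : slotGuard a c b u v e) (g : Sym2 ℤ → Fin 6) :
    g s(u, wcand a c b u v) ∈ Forb a b c u v e g :=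
  Finset.mem_union_left _ (Finset.mem_union_left _ (Finset.mem_union_left _
    (Finset.mem_union_right _ (mem_slotF h g))))

lemma mem_Forb4 {a b c u v : ℤ} {e : Sym2 ℤ} (h : slotGuard c a b u v e) (g : Sym2 ℤ → Fin 6) :
    g s(u, wcand c a b u v) ∈ Forb a b c u v e g :=
  Finset.mem_union_left _ (Finset.mem_union_left _ (Finset.mem_union_right _ (mem_slotF h g)))

lemma mem_Forb5 {a b c u v : ℤ} {e : Sym2 ℤ} (h : slotGuard b c a u v e) (g : Sym2 ℤ → Fin 6) :
    g s(u, wcand b c a u v) ∈ Forb a b c u v e g :=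
  Finset.mem_union_left _ (Finset.mem_union_right _ (mem_slotF h g))

lemma mem_Forb6 {a b c u v : ℤ} {e : Sym2 ℤ} (h : slotGuard c b a u v e) (g : Sym2 ℤ → Fin 6) :
    g s(u, wcand c b a u v) ∈ Forb a b c u v e g :=
  Finset.mem_union_right _ (mem_slotF h g)

lemma punch {a b c : ℤ} (ha : 0 < a) (hb : 0 < b) (hc : c < 0) {e : Sym2 ℤ} {u v w : ℤ}
    (hu : e.out.1 = u) (hv : e.out.2 = v) (huv : u ≠ v) (hwu : w ≠ u) (hwv : w ≠ v)
    (heq : c * w = -(a * u + b * v) ∨ c * w = -(b * u + a * v) ∨ b * w = -(a * u + c * v) ∨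
      b * w = -(c * u + a * v) ∨ a * w = -(b * u + c * v) ∨ a * w = -(c * u + b * v))
    (k1 : klt s(u, w) e) (k2 : klt s(v, w) e)
    (hcol : chi a b c s(u, w) = chi a b c e) : False := by
  have hse : s(u, v) = e := by
    have h0 : s(e.out.1, e.out.2) = e := by exact e.out_eq
    rw [hu, hv] at h0; exact h0
  have hca : a ≠ 0 := ne_of_gt ha
  have hcb : b ≠ 0 := ne_of_gt hb
  have hcc : c ≠ 0 := ne_of_lt hc
  have hmem : chi a b c s(u, w) ∈
      Forb a b c u v e (fun f => if _ : klt f e then chi a b c f else 0) := by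
    rcases heq with h | h | h | h | h | h
    · have hw := wcand_eq hcc h
      have hguard : slotGuard a b c u v e := by
        refine ⟨?_, ?_, ?_, ?_, ?_⟩ <;> rw [hw] <;> assumption
      have := mem_Forb1 hguard (fun f => if _ : klt f e then chi a b c f else 0)
      rwa [hw, dif_pos k1] at this
    · have hw := wcand_eq hcc h
      have hguard : slotGuard b a c u v e := by
        refine ⟨?_, ?_, ?_, ?_, ?_⟩ <;> rw [hw] <;> assumption
      have := mem_Forb2 hguard (fun f => if _ : klt f e then chi a b c f else 0)
      rwa [hw, dif_pos k1] at this
    · have hw := wcand_eq hcb h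
      have hguard : slotGuard a c b u v e := by
        refine ⟨?_, ?_, ?_, ?_, ?_⟩ <;> rw [hw] <;> assumption
      have := mem_Forb3 hguard (fun f => if _ : klt f e then chi a b c f else 0)
      rwa [hw, dif_pos k1] at this
    · have hw := wcand_eq hcb h
      have hguard : slotGuard c a b u v e := by
        refine ⟨?_, ?_, ?_, ?_, ?_⟩ <;> rw [hw] <;> assumption
      have := mem_Forb4 hguard (fun f => if _ : klt f e then chi a b c f else 0)
      rwa [hw, dif_pos k1] at this
    · have hw := wcand_eq hca h
      have hguard : slotGuard b c a u v e := by
        refine ⟨?_, ?_, ?_, ?_, ?_⟩ <;> rw [hw] <;> assumption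
      have := mem_Forb5 hguard (fun f => if _ : klt f e then chi a b c f else 0)
      rwa [hw, dif_pos k1] at this
    · have hw := wcand_eq hca h
      have hguard : slotGuard c b a u v e := by
        refine ⟨?_, ?_, ?_, ?_, ?_⟩ <;> rw [hw] <;> assumption
      have := mem_Forb6 hguard (fun f => if _ : klt f e then chi a b c f else 0)
      rwa [hw, dif_pos k1] at this
  have hcard : (Forb a b c u v e (fun f => if _ : klt f e then chi a b c f else 0)).card ≤ 5 :=
    Forb_card_le ha hb hc huv e hse.symm _
  have hne : (Finset.univ \ Forb a b c u v e
      (fun f => if _ : klt f e then chi a b c f else 0)).Nonempty := by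
    rw [Finset.sdiff_nonempty]
    intro hsub
    have hle := Finset.card_le_card hsub
    rw [Finset.card_univ] at hle
    simp only [Fintype.card_fin] at hle
    omega
  have havoid : chi a b c e ∉ Forb a b c u v e
      (fun f => if _ : klt f e then chi a b c f else 0) := by
    have hval : chi a b c e = (Finset.univ \ Forb a b c u v e
        (fun f => if _ : klt f e then chi a b c f else 0)).min' hne := by
      rw [chi_eq, pickF, hu, hv]
      exact dif_pos hne
    rw [hval]
    have hm := Finset.min'_mem _ hne
    rw [Finset.mem_sdiff] at hm
    exact hm.2
  rw [hcol] at hmem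
  exact havoid hmem

/-! ### The mixed-signs case -/

lemma ne_pairs {x y z : ℤ} (hxy : x ≠ y) (hxz : x ≠ z) (hyz : y ≠ z) :
    s(x, y) ≠ s(x, z) ∧ s(x, y) ≠ s(y, z) ∧ s(x, z) ≠ s(y, z) := by
  refine ⟨fun h => ?_, fun h => ?_, fun h => ?_⟩ <;> rw [Sym2.eq_iff] at h <;> tauto

lemma out_cases {x y : ℤ} (e : Sym2 ℤ) (he : e = s(x, y)) :
    (e.out.1 = x ∧ e.out.2 = y) ∨ (e.out.1 = y ∧ e.out.2 = x) := by
  have h0 : s(e.out.1, e.out.2) = s(x, y) := by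
    change (Quot.mk _ (Quot.out e) : Sym2 ℤ) = s(x, y)
    exact he ▸ e.out_eq
  rw [Sym2.eq_iff] at h0
  tauto

lemma mixed (a b c : ℤ) (ha : 0 < a) (hb : 0 < b) (hc : c < 0) :
    ∃ χ : Sym2 ℤ → Fin 6,
      ∀ x y z : ℤ, x ≠ y → x ≠ z → y ≠ z → a * x + b * y + c * z = 0 →
        ¬ (χ s(x, y) = χ s(x, z) ∧ χ s(x, y) = χ s(y, z)) := by
  refine ⟨chi a b c, ?_⟩
  intro x y z hxy hxz hyz heq hcon
  obtain ⟨H1, H2⟩ := hcon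
  obtain ⟨hne12, hne13, hne23⟩ := ne_pairs hxy hxz hyz
  have heq1 : c * z = -(a * x + b * y) := by linarith
  have heq2 : c * z = -(b * y + a * x) := by linarith
  have heq3 : b * y = -(a * x + c * z) := by linarith
  have heq4 : b * y = -(c * z + a * x) := by linarith
  have heq5 : a * x = -(b * y + c * z) := by linarith
  have heq6 : a * x = -(c * z + b * y) := by linarith
  -- case analysis on the top pair
  have top1 : klt s(x, z) s(x, y) → klt s(y, z) s(x, y) → False := by
    intro k21 k31
    rcases out_cases s(x, y) rfl with ⟨hu, hv⟩ | ⟨hu, hv⟩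
    · exact punch ha hb hc hu hv hxy (Ne.symm hxz) (Ne.symm hyz) (Or.inl heq1) k21 k31 H1.symm
    · exact punch ha hb hc hu hv (Ne.symm hxy) (Ne.symm hyz) (Ne.symm hxz)
        (Or.inr (Or.inl heq2)) k31 k21 H2.symm
  have top2 : klt s(x, y) s(x, z) → klt s(y, z) s(x, z) → False := by
    intro k12 k32
    have k32' : klt s(z, y) s(x, z) := by rwa [Sym2.eq_swap]
    rcases out_cases s(x, z) rfl with ⟨hu, hv⟩ | ⟨hu, hv⟩
    · exact punch ha hb hc hu hv hxz (Ne.symm hxy) hyz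
        (Or.inr (Or.inr (Or.inl heq3))) k12 k32' H1
    · refine punch ha hb hc hu hv (Ne.symm hxz) hyz (Ne.symm hxy)
        (Or.inr (Or.inr (Or.inr (Or.inl heq4)))) k32' k12 ?_
      rw [Sym2.eq_swap]
      exact H2.symm.trans H1
  have top3 : klt s(x, y) s(y, z) → klt s(x, z) s(y, z) → False := by
    intro k13 k23
    have k13' : klt s(y, x) s(y, z) := by rwa [Sym2.eq_swap]
    have k23' : klt s(z, x) s(y, z) := by rwa [Sym2.eq_swap]
    rcases out_cases s(y, z) rfl with ⟨hu, hv⟩ | ⟨hu, hv⟩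
    · refine punch ha hb hc hu hv hyz hxy hxz
        (Or.inr (Or.inr (Or.inr (Or.inr (Or.inl heq5))))) k13' k23' ?_
      rw [Sym2.eq_swap]
      exact H2
    · refine punch ha hb hc hu hv (Ne.symm hyz) hxz hxy
        (Or.inr (Or.inr (Or.inr (Or.inr (Or.inr heq6))))) k23' k13' ?_
      rw [Sym2.eq_swap]
      exact H1.symm.trans H2
  rcases klt_total s(x, y) s(x, z) with h12 | h | h21
  · rcases klt_total s(x, z) s(y, z) with h23 | h | h32
    · exact top3 (klt_trans h12 h23) h23
    · exact hne23 h
    · exact top2 h12 h32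
  · exact hne12 h
  · rcases klt_total s(x, y) s(y, z) with h13 | h | h31
    · exact top3 h13 (klt_trans h21 h13)
    · exact hne13 h
    · exact top1 h21 h31

/-! ### The same-sign case -/

lemma possign (a b c : ℤ) (ha : 0 < a) (hb : 0 < b) (hc : 0 < c) :
    ∃ χ : Sym2 ℤ → Fin 6,
      ∀ x y z : ℤ, x ≠ y → x ≠ z → y ≠ z → a * x + b * y + c * z = 0 →
        ¬ (χ s(x, y) = χ s(x, z) ∧ χ s(x, y) = χ s(y, z)) := by
  refine ⟨Sym2.lift ⟨fun u v => if (0 ≤ u ↔ 0 ≤ v) then (0 : Fin 6) else 1, ?_⟩, ?_⟩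
  · intro u v
    show (if (0 ≤ u ↔ 0 ≤ v) then (0 : Fin 6) else 1) =
      (if (0 ≤ v ↔ 0 ≤ u) then (0 : Fin 6) else 1)
    by_cases h : (0 ≤ u ↔ 0 ≤ v)
    · rw [if_pos h, if_pos h.symm]
    · rw [if_neg h, if_neg (fun h' => h h'.symm)]
  · intro x y z hxy hxz hyz heq hcon
    obtain ⟨H1, H2⟩ := hcon
    simp only [Sym2.lift_mk] at H1 H2
    by_cases p1 : (0 ≤ x ↔ 0 ≤ y) <;> by_cases p2 : (0 ≤ x ↔ 0 ≤ z)
    · -- all same sign class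
      have hy := p1
      have hz := p2
      by_cases hx : 0 ≤ x
      · have hy' : 0 ≤ y := hy.mp hx
        have hz' : 0 ≤ z := hz.mp hx
        have h1 : 0 ≤ a * x := mul_nonneg (le_of_lt ha) hx
        have h2 : 0 ≤ b * y := mul_nonneg (le_of_lt hb) hy'
        have h3 : 0 ≤ c * z := mul_nonneg (le_of_lt hc) hz'
        have hx0 : a * x = 0 := by linarith
        have hy0 : b * y = 0 := by linarith
        have hxx : x = 0 := by
          rcases mul_eq_zero.mp hx0 with h | h
          · exact absurd h (ne_of_gt ha)
          · exact h
        have hyy : y = 0 := by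
          rcases mul_eq_zero.mp hy0 with h | h
          · exact absurd h (ne_of_gt hb)
          · exact h
        exact hxy (hxx.trans hyy.symm)
      · have hy' : ¬ 0 ≤ y := fun h => hx (hy.mpr h)
        have hz' : ¬ 0 ≤ z := fun h => hx (hz.mpr h)
        have h1 : a * x < 0 := mul_neg_of_pos_of_neg ha (by omega)
        have h2 : b * y < 0 := mul_neg_of_pos_of_neg hb (by omega)
        have h3 : c * z < 0 := mul_neg_of_pos_of_neg hc (by omega)
        linarith
    · rw [if_pos p1, if_neg p2] at H1
      exact absurd H1 (by decide)
    · rw [if_neg p1, if_pos p2] at H1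
      exact absurd H1 (by decide)
    · have p3 : (0 ≤ y ↔ 0 ≤ z) := by tauto
      rw [if_neg p1, if_pos p3] at H2
      exact absurd H2 (by decide)

end NoMonoAux

end

/-- For nonzero integers `a, b, c` there is a 6-coloring of the 2-element subsets of `ℤ`
such that for every solution of `a·x + b·y + c·z = 0` by pairwise distinct integers, the
three pairs `{x,y}, {x,z}, {y,z}` do not all receive the same color. -/
theorem no_monochromatic_triple_six_colors (a b c : ℤ) (ha : a ≠ 0) (hb : b ≠ 0)
    (hc : c ≠ 0) :
    ∃ χ : Sym2 ℤ → Fin 6,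
      ∀ x y z : ℤ, x ≠ y → x ≠ z → y ≠ z → a * x + b * y + c * z = 0 →
        ¬ (χ s(x, y) = χ s(x, z) ∧ χ s(x, y) = χ s(y, z)) := by
  rcases lt_or_gt_of_ne ha with ha' | ha' <;> rcases lt_or_gt_of_ne hb with hb' | hb' <;>
    rcases lt_or_gt_of_ne hc with hc' | hc'
  · -- (-,-,-)
    obtain ⟨χ, hχ⟩ := NoMonoAux.possign (-a) (-b) (-c) (by omega) (by omega) (by omega)
    exact ⟨χ, fun x y z h1 h2 h3 heq => hχ x y z h1 h2 h3 (by linarith)⟩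
  · -- (-,-,+) : flip to (+,+,-)
    obtain ⟨χ, hχ⟩ := NoMonoAux.mixed (-a) (-b) (-c) (by omega) (by omega) (by omega)
    exact ⟨χ, fun x y z h1 h2 h3 heq => hχ x y z h1 h2 h3 (by linarith)⟩
  · -- (-,+,-) : flip to (+,-,+); use mixed (-a) (-c) (-b) at (x,z,y)
    obtain ⟨χ, hχ⟩ := NoMonoAux.mixed (-a) (-c) (-b) (by omega) (by omega) (by omega)
    refine ⟨χ, fun x y z h1 h2 h3 heq hcon => ?_⟩
    obtain ⟨H1, H2⟩ := hcon
    refine hχ x z y h2 h1 (Ne.symm h3) (by linarith) ⟨H1.symm, ?_⟩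
    rw [show s(z,y) = s(y,z) from Sym2.eq_swap]
    exact H1.symm.trans H2
  · -- (-,+,+) : use mixed b c a at (y,z,x)
    obtain ⟨χ, hχ⟩ := NoMonoAux.mixed b c a hb' hc' ha'
    refine ⟨χ, fun x y z h1 h2 h3 heq hcon => ?_⟩
    obtain ⟨H1, H2⟩ := hcon
    refine hχ y z x h3 (Ne.symm h1) (Ne.symm h2) (by linarith) ⟨?_, ?_⟩
    · rw [show s(y,x) = s(x,y) from Sym2.eq_swap]
      exact H2.symm
    · rw [show s(z,x) = s(x,z) from Sym2.eq_swap]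
      exact H2.symm.trans H1
  · -- (+,-,-) : flip to (-,+,+); use mixed (-b) (-c) (-a) at (y,z,x)
    obtain ⟨χ, hχ⟩ := NoMonoAux.mixed (-b) (-c) (-a) (by omega) (by omega) (by omega)
    refine ⟨χ, fun x y z h1 h2 h3 heq hcon => ?_⟩
    obtain ⟨H1, H2⟩ := hcon
    refine hχ y z x h3 (Ne.symm h1) (Ne.symm h2) (by linarith) ⟨?_, ?_⟩
    · rw [show s(y,x) = s(x,y) from Sym2.eq_swap]
      exact H2.symm
    · rw [show s(z,x) = s(x,z) from Sym2.eq_swap]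
      exact H2.symm.trans H1
  · -- (+,-,+) : use mixed a c b at (x,z,y)
    obtain ⟨χ, hχ⟩ := NoMonoAux.mixed a c b ha' hc' hb'
    refine ⟨χ, fun x y z h1 h2 h3 heq hcon => ?_⟩
    obtain ⟨H1, H2⟩ := hcon
    refine hχ x z y h2 h1 (Ne.symm h3) (by linarith) ⟨H1.symm, ?_⟩
    rw [show s(z,y) = s(y,z) from Sym2.eq_swap]
    exact H1.symm.trans H2
  · -- (+,+,-)
    exact NoMonoAux.mixed a b c ha' hb' hc'
  · -- (+,+,+)
    exact NoMonoAux.possign a b c ha' hb' hc'
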